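/- Let ρ > 0, α ≥ 0 and C ≥ 0, and let f : [-ρ, ρ] × ℝ → ℝ be a positive function, twice continuously differentiable, 2π-periodic in its second variable, satisfying for all (σ, θ) ∈ [-ρ, ρ] × ℝ the inequality ∂²f/∂σ²(σ, θ) ≤ (α/2)·f(σ, θ), and at the two ends the bounds |∂f/∂σ(-ρ, θ)| ≤ C·f(-ρ, θ) and |∂f/∂σ(ρ, θ)| ≤ C·f(ρ, θ). For s ∈ [-ρ, ρ] define L_s = ∫₀^{2π} f(s, θ) dθ. Then for all s, q ∈ [-ρ, ρ]: L_s·exp(-2ρ(αρ + C)) ≤ L_q ≤ L_s·exp(2ρ(αρ + C)). -/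

import Mathlib

open Set intervalIntegral


open Set

lemma key_one_var (ρ α C : ℝ) (hρ : 0 < ρ) (hα : 0 ≤ α) (hC : 0 ≤ C)
    (g g' g'' : ℝ → ℝ)
    (hpos : ∀ σ ∈ Icc (-ρ) ρ, 0 < g σ)
    (hd : ∀ σ ∈ Icc (-ρ) ρ, HasDerivWithinAt g (g' σ) (Icc (-ρ) ρ) σ)
    (hd' : ∀ σ ∈ Icc (-ρ) ρ, HasDerivWithinAt g' (g'' σ) (Icc (-ρ) ρ) σ)
    (hineq : ∀ σ ∈ Icc (-ρ) ρ, g'' σ ≤ (α / 2) * g σ)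
    (hbl : |g' (-ρ)| ≤ C * g (-ρ)) (hbr : |g' ρ| ≤ C * g ρ) :
    ∀ s ∈ Icc (-ρ) ρ, ∀ q ∈ Icc (-ρ) ρ,
      g q ≤ g s * Real.exp (2 * ρ * (α * ρ + C)) := by
  intro s hs q hq
  have hle : (-ρ : ℝ) ≤ ρ := by linarith
  have hmemL : (-ρ : ℝ) ∈ Icc (-ρ) ρ := ⟨le_refl _, hle⟩
  have hmemR : (ρ : ℝ) ∈ Icc (-ρ) ρ := ⟨hle, le_refl _⟩
  set S := Icc (-ρ : ℝ) ρ with hS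
  have hconv : Convex ℝ S := convex_Icc _ _
  set u : ℝ → ℝ := fun σ => g' σ / g σ with hu_def
  -- derivative of u - (α/2)σ within S
  have hu : ∀ σ ∈ S, HasDerivWithinAt (fun x => u x - α / 2 * x)
      (g'' σ / g σ - (u σ) ^ 2 - α / 2) S σ := by
    intro σ hσ
    have hgne : g σ ≠ 0 := (hpos σ hσ).ne'
    have h1 : HasDerivWithinAt u
        ((g'' σ * g σ - g' σ * g' σ) / (g σ) ^ 2) S σ :=
      (hd' σ hσ).div (hd σ hσ) hgne
    have h2 : HasDerivWithinAt (fun x : ℝ => α / 2 * x) (α / 2) S σ := by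
      simpa using (hasDerivWithinAt_id σ S).const_mul (α / 2)
    have := h1.sub h2
    refine this.congr_deriv ?_
    simp only [hu_def]
    field_simp
  have hucont : ContinuousOn (fun x => u x - α / 2 * x) S := by
    intro σ hσ
    exact ((hu σ hσ).continuousWithinAt)
  have hanti : AntitoneOn (fun x => u x - α / 2 * x) S := by
    apply antitoneOn_of_hasDerivWithinAt_nonpos hconv hucont
    · intro x hx
      exact ((hu x (interior_subset hx)).mono interior_subset)
    · intro x hx
      have hxS : x ∈ S := interior_subset hx
      have hgpos := hpos x hxS
      have h1 : g'' x / g x ≤ α / 2 := by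
        rw [div_le_iff₀ hgpos]
        have := hineq x hxS
        linarith [hineq x hxS]
      nlinarith [sq_nonneg (u x)]
  -- bounds on u
  have huL : u (-ρ) ≤ C := by
    rw [hu_def]
    rw [div_le_iff₀ (hpos _ hmemL)]
    calc g' (-ρ) ≤ |g' (-ρ)| := le_abs_self _
      _ ≤ C * g (-ρ) := hbl
  have huR : -C ≤ u ρ := by
    rw [hu_def]
    rw [le_div_iff₀ (hpos _ hmemR)]
    have := neg_abs_le (g' ρ)
    nlinarith [hbr]
  have hub : ∀ σ ∈ S, |u σ| ≤ C + α * ρ := by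
    intro σ hσ
    have h1 := hanti hmemL hσ hσ.1
    have h2 := hanti hσ hmemR hσ.2
    simp only at h1 h2
    rw [abs_le]
    constructor
    · nlinarith [hσ.1, hσ.2]
    · nlinarith [hσ.1, hσ.2]
  -- log g is Lipschitz with constant C + αρ
  have hlog : ∀ σ ∈ S, HasDerivWithinAt (fun x => Real.log (g x)) (u σ) S σ := by
    intro σ hσ
    exact (hd σ hσ).log (hpos σ hσ).ne'
  have hlip := Convex.norm_image_sub_le_of_norm_hasDerivWithin_le hlog
    (fun x hx => by simpa using hub x hx) hconv hs hq
  have hqs : ‖q - s‖ ≤ 2 * ρ := by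
    rw [Real.norm_eq_abs, abs_le]
    constructor <;> nlinarith [hs.1, hs.2, hq.1, hq.2]
  have hK : Real.log (g q) - Real.log (g s) ≤ 2 * ρ * (α * ρ + C) := by
    have h1 : Real.log (g q) - Real.log (g s) ≤ ‖Real.log (g q) - Real.log (g s)‖ :=
      le_abs_self _
    have h2 : (C + α * ρ) * ‖q - s‖ ≤ (C + α * ρ) * (2 * ρ) := by
      apply mul_le_mul_of_nonneg_left hqs
      nlinarith
    calc Real.log (g q) - Real.log (g s) ≤ (C + α * ρ) * ‖q - s‖ := le_trans h1 hlip
      _ ≤ (C + α * ρ) * (2 * ρ) := h2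
      _ = 2 * ρ * (α * ρ + C) := by ring
  have hgq := hpos q hq
  have hgs := hpos s hs
  calc g q = Real.exp (Real.log (g q)) := (Real.exp_log hgq).symm
    _ ≤ Real.exp (Real.log (g s) + 2 * ρ * (α * ρ + C)) := by
        apply Real.exp_le_exp.2; linarith
    _ = g s * Real.exp (2 * ρ * (α * ρ + C)) := by
        rw [Real.exp_add, Real.exp_log hgs]


open intervalIntegral in
theorem stmt_2 (ρ α C : ℝ) (hρ : 0 < ρ) (hα : 0 ≤ α) (hC : 0 ≤ C)
    (f fσ fσσ : ℝ → ℝ → ℝ)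
    (hpos : ∀ σ ∈ Icc (-ρ) ρ, ∀ θ : ℝ, 0 < f σ θ)
    (hper : ∀ σ ∈ Icc (-ρ) ρ, ∀ θ : ℝ, f σ (θ + 2 * Real.pi) = f σ θ)
    (hder : ∀ θ : ℝ, ∀ σ ∈ Icc (-ρ) ρ,
      HasDerivWithinAt (fun x => f x θ) (fσ σ θ) (Icc (-ρ) ρ) σ)
    (hder' : ∀ θ : ℝ, ∀ σ ∈ Icc (-ρ) ρ,
      HasDerivWithinAt (fun x => fσ x θ) (fσσ σ θ) (Icc (-ρ) ρ) σ)
    (hcont : ContinuousOn (fun p : ℝ × ℝ => f p.1 p.2) (Icc (-ρ) ρ ×ˢ univ))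
    (hcont' : ContinuousOn (fun p : ℝ × ℝ => fσ p.1 p.2) (Icc (-ρ) ρ ×ˢ univ))
    (hcont'' : ContinuousOn (fun p : ℝ × ℝ => fσσ p.1 p.2) (Icc (-ρ) ρ ×ˢ univ))
    (hineq : ∀ σ ∈ Icc (-ρ) ρ, ∀ θ : ℝ, fσσ σ θ ≤ (α / 2) * f σ θ)
    (hbl : ∀ θ : ℝ, |fσ (-ρ) θ| ≤ C * f (-ρ) θ)
    (hbr : ∀ θ : ℝ, |fσ ρ θ| ≤ C * f ρ θ)
    (L : ℝ → ℝ) (hL : ∀ s, L s = ∫ θ in (0:ℝ)..(2 * Real.pi), f s θ) :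
    ∀ s ∈ Icc (-ρ) ρ, ∀ q ∈ Icc (-ρ) ρ,
      L s * Real.exp (-(2 * ρ * (α * ρ + C))) ≤ L q ∧
      L q ≤ L s * Real.exp (2 * ρ * (α * ρ + C)) := by
  -- pointwise comparison for each θ
  have hkey : ∀ s ∈ Icc (-ρ) ρ, ∀ q ∈ Icc (-ρ) ρ, ∀ θ : ℝ,
      f q θ ≤ f s θ * Real.exp (2 * ρ * (α * ρ + C)) := by
    intro s hs q hq θ
    exact key_one_var ρ α C hρ hα hC (fun x => f x θ) (fun x => fσ x θ)
      (fun x => fσσ x θ) (fun σ hσ => hpos σ hσ θ) (hder θ) (hder' θ)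
      (fun σ hσ => hineq σ hσ θ) (hbl θ) (hbr θ) s hs q hq
  -- continuity of slices
  have hslice : ∀ s ∈ Icc (-ρ) ρ, Continuous (fun θ => f s θ) := by
    intro s hs
    have : Continuous (fun θ : ℝ => ((s, θ) : ℝ × ℝ)) := by continuity
    exact hcont.comp_continuous this (fun θ => ⟨hs, mem_univ θ⟩)
  have hint : ∀ s ∈ Icc (-ρ) ρ,
      IntervalIntegrable (fun θ => f s θ) MeasureTheory.volume 0 (2 * Real.pi) :=
    fun s hs => (hslice s hs).intervalIntegrable _ _
  intro s hs q hq
  have h2pi : (0:ℝ) ≤ 2 * Real.pi := by positivity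
  have hmain : ∀ s' ∈ Icc (-ρ) ρ, ∀ q' ∈ Icc (-ρ) ρ,
      L q' ≤ L s' * Real.exp (2 * ρ * (α * ρ + C)) := by
    intro s' hs' q' hq'
    rw [hL, hL]
    rw [← intervalIntegral.integral_mul_const]
    apply intervalIntegral.integral_mono_on h2pi (hint q' hq')
      ((hint s' hs').mul_const _)
    intro θ _
    exact hkey s' hs' q' hq' θ
  refine ⟨?_, hmain s hs q hq⟩
  have h1 := hmain q hq s hs
  have hexp : (0:ℝ) < Real.exp (2 * ρ * (α * ρ + C)) := Real.exp_pos _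
  rw [Real.exp_neg]
  rw [mul_inv_le_iff₀ hexp]
  linarith
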